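/- For all natural numbers s ≥ 1, q ≥ 0, and all x: (-1)^{sq} · F_s(x) · Σ_{n=0}^{q} (-1)^{sn} F_{2sn}(x) = F_{s(q+1)}(x) · F_{sq}(x). -/

import Mathlib

/-- Fibonacci polynomials evaluated at a real `x`. -/
def fibP : ℕ → ℝ → ℝ
  | 0, _ => 0
  | 1, _ => 1
  | n + 2, x => x * fibP (n + 1) x + fibP n x

/-- Lucas polynomials evaluated at a real `x`. -/
def lucasP : ℕ → ℝ → ℝ
  | 0, _ => 2
  | 1, x => x
  | n + 2, x => x * lucasP (n + 1) x + lucasP n x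

lemma fibP_two_step (n : ℕ) (x : ℝ) :
    fibP (n + 2) x = x * fibP (n + 1) x + fibP n x := rfl

lemma lucasP_two_step (n : ℕ) (x : ℝ) :
    lucasP (n + 2) x = x * lucasP (n + 1) x + lucasP n x := rfl

lemma fib_add (x : ℝ) : ∀ n m, fibP (m + n + 1) x =
    fibP (m + 1) x * fibP (n + 1) x + fibP m x * fibP n x
  | 0, m => by simp [fibP]
  | 1, m => by
    show fibP (m + 2) x = _
    rw [fibP_two_step]
    simp [fibP]; ring
  | (n + 2), m => by
    have h1 := fib_add x n m
    have h2 := fib_add x (n + 1) m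
    rw [show m + (n + 1) + 1 = (m + n + 1) + 1 from by omega,
      show n + 1 + 1 = n + 2 from rfl] at h2
    rw [show m + (n + 2) + 1 = (m + n + 1) + 2 from by omega, fibP_two_step,
      show n + 2 + 1 = (n + 1) + 2 from rfl, fibP_two_step (n + 1),
      fibP_two_step n]
    linear_combination x * h2 + h1 + x * fibP (m + 1) x * fibP_two_step n x

lemma docagne (x : ℝ) : ∀ n k, fibP (n + k) x * fibP (n + 1) x -
    fibP (n + k + 1) x * fibP n x = (-1 : ℝ) ^ n * fibP k x
  | 0, k => by simp [fibP]
  | (n + 1), k => by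
    have h := docagne x n k
    rw [show n + 1 + k = (n + k) + 1 from by omega,
      show n + k + 1 + 1 = (n + k) + 2 from rfl, fibP_two_step (n + k),
      show n + 1 + 1 = n + 2 from rfl, fibP_two_step n, pow_succ]
    linear_combination (-1 : ℝ) * h

lemma lucas_fib (x : ℝ) : ∀ j, lucasP (j + 1) x = fibP (j + 2) x + fibP j x
  | 0 => by simp [fibP, lucasP]
  | 1 => by
    show lucasP 2 x = fibP 3 x + fibP 1 x
    simp [fibP, lucasP]; ring
  | (j + 2) => by
    have h1 := lucas_fib x j
    have h2 := lucas_fib x (j + 1)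
    rw [show j + 1 + 2 = (j + 1) + 2 from rfl, lucasP_two_step (j + 1),
      show j + 2 + 2 = (j + 2) + 2 from rfl, fibP_two_step (j + 2),
      show j + 1 + 1 = j + 2 from rfl] at *
    rw [h1, h2, fibP_two_step (j + 1), fibP_two_step j]
    ring

lemma key (x : ℝ) (n k : ℕ) : fibP (2 * n + k) x =
    fibP n x * lucasP (n + k) x + (-1 : ℝ) ^ n * fibP k x := by
  cases n with
  | zero => simp [fibP]
  | succ t =>
    have hdoc := docagne x (t + 1) k
    rw [show t + 1 + k = (t + k) + 1 from by omega,
      show t + k + 1 + 1 = (t + k) + 2 from rfl,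
      show t + 1 + 1 = t + 2 from rfl] at hdoc
    rw [show 2 * (t + 1) + k = (t + 1) + (t + k) + 1 from by omega,
      fib_add x (t + k) (t + 1),
      show t + 1 + k = (t + k) + 1 from by omega, lucas_fib x (t + k),
      show t + 1 + 1 = t + 2 from rfl]
    linear_combination hdoc

theorem stmt_9 (s q : ℕ) (hs : 1 ≤ s) (x : ℝ) :
    (-1 : ℝ) ^ (s * q) * fibP s x *
        ∑ n ∈ Finset.range (q + 1), (-1 : ℝ) ^ (s * n) * fibP (2 * s * n) x =
      fibP (s * (q + 1)) x * fibP (s * q) x := by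
  induction q with
  | zero => simp [fibP]
  | succ q ih =>
    rw [Finset.sum_range_succ]
    have hsq : (-1 : ℝ) ^ (s * (q + 1)) = (-1 : ℝ) ^ (s * q) * (-1 : ℝ) ^ s := by
      rw [← pow_add]; ring_nf
    have hsq2 : ((-1 : ℝ) ^ (s * (q + 1))) * ((-1 : ℝ) ^ (s * (q + 1))) = 1 := by
      rw [← pow_add, ← two_mul, pow_mul]; norm_num
    have k1 := key x (s * (q + 1)) 0
    rw [show 2 * (s * (q + 1)) + 0 = 2 * s * (q + 1) from by ring,
      show s * (q + 1) + 0 = s * (q + 1) from by ring] at k1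
    simp only [fibP, mul_zero, add_zero] at k1
    have k2 := key x s (s * q)
    rw [show 2 * s + s * q = s * (q + 1 + 1) from by ring,
      show s + s * q = s * (q + 1) from by ring] at k2
    linear_combination
      (fibP s x * ∑ n ∈ Finset.range (q + 1),
          (-1 : ℝ) ^ (s * n) * fibP (2 * s * n) x) * hsq
      + (fibP s x * fibP (2 * s * (q + 1)) x) * hsq2
      + ((-1 : ℝ) ^ s) * ih
      + fibP s x * k1
      - fibP (s * (q + 1)) x * k2
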